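/- If a, b, c, d are unit quaternions satisfying abcd = dcba and ab ≠ ba, then for x = (ab - ba)/‖ab - ba‖ one has Re(xc) = 0 and Re(xd) = 0. -/

import Mathlib

open Quaternion

lemma re_mul_comm' (p q : ℍ[ℝ]) : (p * q).re = (q * p).re := by
  simp [Quaternion.re_mul]; ring

lemma re_mul_star' (p q : ℍ[ℝ]) : (p * q).re + (p * star q).re = 2 * p.re * q.re := by
  simp [Quaternion.re_mul]; ring

lemma unit_star_mul (q : ℍ[ℝ]) (h : ‖q‖ = 1) :
    q * star q = 1 ∧ star q * q = 1 := by
  have h1 : normSq q = 1 := by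
    rw [Quaternion.normSq_eq_norm_mul_self, h, one_mul]
  constructor
  · rw [Quaternion.self_mul_star, h1]; norm_num
  · rw [Quaternion.star_mul_self, h1]; norm_num

/-- If unit quaternions `a, b, c, d` satisfy `abcd = dcba` and `ab ≠ ba`, then for
`x = (ab - ba)/‖ab - ba‖` one has `Re(xc) = 0` and `Re(xd) = 0`. -/
theorem normalized_commutator_orthogonal_cd (a b c d : ℍ[ℝ])
    (ha : ‖a‖ = 1) (hb : ‖b‖ = 1) (hc : ‖c‖ = 1) (hd : ‖d‖ = 1)
    (habcd : a * b * c * d = d * c * b * a) (hab : a * b ≠ b * a) :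
    ((‖a * b - b * a‖⁻¹ • (a * b - b * a)) * c).re = 0 ∧
    ((‖a * b - b * a‖⁻¹ • (a * b - b * a)) * d).re = 0 := by
  obtain ⟨hd1, hd2⟩ := unit_star_mul d hd
  obtain ⟨hc1, hc2⟩ := unit_star_mul c hc
  -- a*b*c = d*c*b*a*(star d)
  have hA : a * b * c = d * c * b * a * star d := by
    have h : a * b * c * d * star d = d * c * b * a * star d := by rw [habcd]
    rw [mul_assoc (a * b * c) d (star d), hd1, mul_one] at h
    exact h
  -- Re(abc) = Re(c(ba))
  have e1 : (a * b * c).re = (c * (b * a)).re := by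
    rw [hA]
    have h1 : d * c * b * a * star d = d * (c * b * a * star d) := by
      noncomm_ring
    rw [h1, re_mul_comm' d (c * b * a * star d)]
    have h2 : c * b * a * star d * d = c * (b * a) := by
      rw [mul_assoc (c * b * a) (star d) d, hd2, mul_one, mul_assoc]
    rw [h2]
  have e2 : ((a * b - b * a) * c).re = 0 := by
    rw [sub_mul, Quaternion.re_sub, e1, re_mul_comm' (b * a) c]
    exact sub_self _
  -- a*b = d*c*b*a*(star d)*(star c)
  have h3 : a * b = d * c * b * a * star d * star c := by
    have h : a * b * c * star c = d * c * b * a * star d * star c := by rw [hA]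
    rw [mul_assoc (a * b) c (star c), hc1, mul_one] at h
    exact h
  have hB : star d * (a * b) = c * (b * a * star d * star c) := by
    rw [h3]
    have h4 : star d * (d * c * b * a * star d * star c)
        = star d * d * (c * (b * a * star d * star c)) := by noncomm_ring
    rw [h4, hd2, one_mul]
  have r1 : (a * b * star d).re = (b * a * star d).re := by
    rw [re_mul_comm' (a * b) (star d)]
    rw [show star d * (a * b) = c * (b * a * star d * star c) from hB,
      re_mul_comm' c (b * a * star d * star c)]
    have h5 : b * a * star d * star c * c = b * a * star d := by
      rw [mul_assoc (b * a * star d) (star c) c, hc2, mul_one]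
    rw [h5]
  have e3 : ((a * b - b * a) * star d).re = 0 := by
    rw [sub_mul, Quaternion.re_sub, r1]
    exact sub_self _
  have hxre : (a * b - b * a).re = 0 := by
    rw [Quaternion.re_sub, re_mul_comm' a b]
    exact sub_self _
  have e4 : ((a * b - b * a) * d).re = 0 := by
    have := re_mul_star' (a * b - b * a) d
    rw [e3, hxre] at this
    linarith
  constructor
  · rw [smul_mul_assoc, Quaternion.re_smul, e2]; simp
  · rw [smul_mul_assoc, Quaternion.re_smul, e4]; simp
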